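/- Colorful K_{ℓ,m} theorem via cross-index: let G be a graph with χ(G) = Xind(Hom(K₂,G)) + 2 = t. Given any proper coloring c : V(G) → [t] and any bipartition I ∪ J = [t], I ∩ J = ∅, there exists a complete bipartite subgraph K_{|I|,|J|} of G with color set exactly I on one side and exactly J on the other side. -/

import Mathlib

/-- `φ : P → ℤ` represents an order-preserving `ℤ₂`-map from the `ℤ₂`-poset
`(P, neg)` to `Q_s`, the poset on `{±1,…,±(s+1)}` where `x < y` iff `|x| < |y|`,
with involution `z ↦ -z`. -/
def IsQMap {P : Type*} [PartialOrder P] (neg : P → P) (s : ℕ) (φ : P → ℤ) : Prop :=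
  (∀ p, 1 ≤ |φ p| ∧ |φ p| ≤ (s : ℤ) + 1) ∧ (∀ p, φ (neg p) = -φ p) ∧
    ∀ p q : P, p ≤ q → (φ p = φ q ∨ |φ p| < |φ q|)

/-- The cross-index `Xind(P)` of a `ℤ₂`-poset: the least `s` such that there is
an order-preserving `ℤ₂`-map `P → Q_s`. -/
noncomputable def Xind (P : Type*) [PartialOrder P] (neg : P → P) : ℕ :=
  sInf {s | ∃ φ : P → ℤ, IsQMap neg s φ}

/-- The Hom complex `Hom(K₂,G)` as a poset: pairs `(A,B)` of nonempty disjoint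
vertex subsets such that every vertex of `A` is adjacent to every vertex of `B`,
ordered by componentwise inclusion. -/
def HomPoset {V : Type*} (G : SimpleGraph V) : Type _ :=
  {AB : Finset V × Finset V // AB.1.Nonempty ∧ AB.2.Nonempty ∧ Disjoint AB.1 AB.2 ∧
    ∀ a ∈ AB.1, ∀ b ∈ AB.2, G.Adj a b}

instance {V : Type*} (G : SimpleGraph V) : PartialOrder (HomPoset G) :=
  Subtype.partialOrder _

/-- The free involution on `Hom(K₂,G)` swapping the two sides. -/
def homNeg {V : Type*} (G : SimpleGraph V) : HomPoset G → HomPoset G :=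
  fun x => ⟨(x.1.2, x.1.1), x.2.2.1, x.2.1, x.2.2.2.1.symm,
    fun a ha b hb => (x.2.2.2.2 b hb a ha).symm⟩

set_option linter.unusedSectionVars false
namespace ColorfulKlmAux

open Finset

variable {α : Type*} [DecidableEq α] [LinearOrder α]

/-- One step of the recursive labelling. -/
def psiStep (M : ℤ) (δ : α) (S1 S2 : Finset α × Finset α)
    (rec : Finset α × Finset α → ℤ) (pq : Finset α × Finset α) : ℤ :=
  if δ ∈ pq.1 then M
  else if δ ∈ pq.2 then -M
  else if pq = S1 then M
  else if pq = S2 then -M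
  else rec pq

theorem psiStep_mem1 {M : ℤ} {δ : α} {S1 S2 rec pq} (h : δ ∈ pq.1) :
    psiStep M δ S1 S2 rec pq = M := by simp [psiStep, h]

theorem psiStep_mem2 {M : ℤ} {δ : α} {S1 S2 rec pq} (h1 : δ ∉ pq.1) (h2 : δ ∈ pq.2) :
    psiStep M δ S1 S2 rec pq = -M := by simp [psiStep, h1, h2]

theorem psiStep_s1 {M : ℤ} {δ : α} {S1 S2 rec pq} (h1 : δ ∉ pq.1) (h2 : δ ∉ pq.2)
    (h3 : pq = S1) : psiStep M δ S1 S2 rec pq = M := by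
  unfold psiStep; rw [if_neg h1, if_neg h2, if_pos h3]

theorem psiStep_s2 {M : ℤ} {δ : α} {S1 S2 rec pq} (h1 : δ ∉ pq.1) (h2 : δ ∉ pq.2)
    (h3 : pq ≠ S1) (h4 : pq = S2) : psiStep M δ S1 S2 rec pq = -M := by
  unfold psiStep; rw [if_neg h1, if_neg h2, if_neg h3, if_pos h4]

theorem psiStep_rec {M : ℤ} {δ : α} {S1 S2 rec pq} (h1 : δ ∉ pq.1) (h2 : δ ∉ pq.2)
    (h3 : pq ≠ S1) (h4 : pq ≠ S2) : psiStep M δ S1 S2 rec pq = rec pq := by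
  unfold psiStep; rw [if_neg h1, if_neg h2, if_neg h3, if_neg h4]

/-- The recursive labelling of partial bipartitions of `I ∪ J`. -/
def psiF : ℕ → Finset α → Finset α → Finset α × Finset α → ℤ
  | 0, _, _, _ => 0
  | (fuel+1), I, J, pq =>
    if hJ : 2 ≤ J.card then
      psiStep (((I ∪ J).card : ℤ) - 2) (J.max' (card_pos.mp (by omega)))
        (I, J.erase (J.max' (card_pos.mp (by omega))))
        (J.erase (J.max' (card_pos.mp (by omega))), I)
        (psiF fuel I (J.erase (J.max' (card_pos.mp (by omega))))) pq
    else if hI : 2 ≤ I.card then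
      psiStep (((I ∪ J).card : ℤ) - 2) (I.max' (card_pos.mp (by omega)))
        (J, I.erase (I.max' (card_pos.mp (by omega))))
        (I.erase (I.max' (card_pos.mp (by omega))), J)
        (psiF fuel (I.erase (I.max' (card_pos.mp (by omega)))) J) pq
    else 0

theorem psiF_succ_J {fuel : ℕ} {I J : Finset α} (hJ2 : 2 ≤ J.card) (hJne : J.Nonempty)
    (pq : Finset α × Finset α) :
    psiF (fuel+1) I J pq =
      psiStep (((I ∪ J).card : ℤ) - 2) (J.max' hJne)
        (I, J.erase (J.max' hJne)) (J.erase (J.max' hJne), I)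
        (psiF fuel I (J.erase (J.max' hJne))) pq := by
  simp only [psiF]
  rw [dif_pos hJ2]

theorem psiF_succ_I {fuel : ℕ} {I J : Finset α} (hJ2 : ¬ 2 ≤ J.card) (hI2 : 2 ≤ I.card)
    (hIne : I.Nonempty) (pq : Finset α × Finset α) :
    psiF (fuel+1) I J pq =
      psiStep (((I ∪ J).card : ℤ) - 2) (I.max' hIne)
        (J, I.erase (I.max' hIne)) (I.erase (I.max' hIne), J)
        (psiF fuel (I.erase (I.max' hIne)) J) pq := by
  simp only [psiF]
  rw [dif_neg hJ2, dif_pos hI2]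

theorem psiF_succ_junk {fuel : ℕ} {I J : Finset α} (hJ2 : ¬ 2 ≤ J.card) (hI2 : ¬ 2 ≤ I.card)
    (pq : Finset α × Finset α) : psiF (fuel+1) I J pq = 0 := by
  simp only [psiF]
  rw [dif_neg hJ2, dif_neg hI2]

/-- Validity of a partial bipartition `(P,Q)` relative to `(I,J)`. -/
def Valid (I J P Q : Finset α) : Prop :=
  P.Nonempty ∧ Q.Nonempty ∧ Disjoint P Q ∧ P ∪ Q ⊆ I ∪ J ∧
    ¬(P = I ∧ Q = J) ∧ ¬(P = J ∧ Q = I)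



theorem junk_valid {I J P Q : Finset α} (hI1 : I.card ≤ 1) (hJ1 : J.card ≤ 1)
    (v : Valid I J P Q) : False := by
  obtain ⟨hP, hQ, hPQ, hsub, hn1, hn2⟩ := v
  have hPp := hP.card_pos
  have hQp := hQ.card_pos
  have hcu : (P ∪ Q).card = P.card + Q.card := card_union_of_disjoint hPQ
  have hle : (P ∪ Q).card ≤ (I ∪ J).card := card_le_card hsub
  have hIJ2 : (I ∪ J).card ≤ I.card + J.card := card_union_le _ _
  have hI1' : I.card = 1 := by omega
  have hJ1' : J.card = 1 := by omega
  have hP1 : P.card = 1 := by omega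
  have hQ1 : Q.card = 1 := by omega
  obtain ⟨p, hp⟩ := card_eq_one.mp hP1
  obtain ⟨q, hq⟩ := card_eq_one.mp hQ1
  obtain ⟨i, hi⟩ := card_eq_one.mp hI1'
  obtain ⟨j, hj⟩ := card_eq_one.mp hJ1'
  have hpq : p ≠ q := by
    intro h
    exact disjoint_left.mp hPQ (by rw [hp]; exact mem_singleton_self p)
      (by rw [hq, h]; exact mem_singleton_self q)
  have hpmem : p ∈ I ∪ J := hsub (by simp [hp])
  have hqmem : q ∈ I ∪ J := hsub (by simp [hq])
  rw [hi, hj] at hpmem hqmem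
  simp only [mem_union, mem_singleton] at hpmem hqmem
  rcases hpmem with rfl | rfl
  · rcases hqmem with rfl | rfl
    · exact hpq rfl
    · exact hn1 ⟨by rw [hp, hi], by rw [hq, hj]⟩
  · rcases hqmem with rfl | rfl
    · exact hn2 ⟨by rw [hp, hj], by rw [hq, hi]⟩
    · exact hpq rfl

theorem psiF_spec :
    ∀ (fuel : ℕ) (I J : Finset α), I.card + J.card ≤ fuel → Disjoint I J →
      I.Nonempty → J.Nonempty →
    ((∀ P Q : Finset α, Valid I J P Q →
        1 ≤ |psiF fuel I J (P, Q)| ∧ |psiF fuel I J (P, Q)| ≤ ((I ∪ J).card : ℤ) - 2) ∧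
     (∀ P Q : Finset α, Disjoint P Q → psiF fuel I J (Q, P) = -psiF fuel I J (P, Q)) ∧
     (∀ P Q P' Q' : Finset α, Valid I J P Q → Valid I J P' Q' → P ⊆ P' → Q ⊆ Q' →
        psiF fuel I J (P, Q) = psiF fuel I J (P', Q') ∨
          |psiF fuel I J (P, Q)| < |psiF fuel I J (P', Q')|)) := by
  intro fuel
  induction fuel with
  | zero =>
    intro I J hfuel _ hInon _
    exact absurd hfuel (by have := hInon.card_pos; omega)
  | succ fuel ih =>
    intro I J hfuel hIJ hInon hJnon
    by_cases hJ2 : 2 ≤ J.card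
    · -- ===================== J-case =====================
      have heval := fun pq => psiF_succ_J (I := I) (fuel := fuel) hJ2 hJnon pq
      set δ := J.max' hJnon with hδdef
      set J' := J.erase δ with hJ'def
      have hδJ : δ ∈ J := J.max'_mem hJnon
      have hδI : δ ∉ I := fun h => disjoint_left.mp hIJ h hδJ
      have hJ'card : J'.card = J.card - 1 := card_erase_of_mem hδJ
      have hJ'ne : J'.Nonempty := card_pos.mp (by omega)
      have hJ'sub : J' ⊆ J := erase_subset _ _
      have hIJ' : Disjoint I J' := hIJ.mono_right hJ'sub
      have hins : insert δ J' = J := insert_erase hδJ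
      have hδJ' : δ ∉ J' := notMem_erase _ _
      have hUnion : I ∪ J' = (I ∪ J).erase δ := by
        ext x
        simp only [mem_union, mem_erase]
        constructor
        · rintro (h | h)
          · exact ⟨fun e => hδI (e ▸ h), Or.inl h⟩
          · exact ⟨(mem_erase.mp h).1, Or.inr (mem_erase.mp h).2⟩
        · rintro ⟨hne, h | h⟩
          · exact Or.inl h
          · exact Or.inr (mem_erase.mpr ⟨hne, h⟩)
      have hUcard : (I ∪ J').card + 1 = (I ∪ J).card := by
        rw [hUnion, card_erase_of_mem (mem_union_right _ hδJ)]
        have : 0 < (I ∪ J).card := card_pos.mpr ⟨δ, mem_union_right _ hδJ⟩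
        omega
      have hU3 : 3 ≤ (I ∪ J).card := by
        have h := card_union_of_disjoint hIJ
        have := hInon.card_pos
        omega
      have hM1 : (1 : ℤ) ≤ ((I ∪ J).card : ℤ) - 2 := by
        have : (3 : ℤ) ≤ ((I ∪ J).card : ℤ) := by exact_mod_cast hU3
        omega
      have hM0 : (0 : ℤ) ≤ ((I ∪ J).card : ℤ) - 2 := by omega
      have hMM : ((I ∪ J').card : ℤ) - 2 < ((I ∪ J).card : ℤ) - 2 := by
        have : ((I ∪ J').card : ℤ) + 1 = ((I ∪ J).card : ℤ) := by exact_mod_cast hUcard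
        omega
      obtain ⟨ih1, ih2, ih3⟩ := ih I J' (by omega) hIJ' hInon hJ'ne
      have hIneJ' : I ≠ J' := by
        intro h
        obtain ⟨a, ha⟩ := hInon
        exact disjoint_left.mp hIJ' ha (h ▸ ha)
      have hJ'I_ne : (J', I) ≠ (I, J') := fun h => hIneJ' (Prod.ext_iff.mp h).2
      have vtrans : ∀ {P Q : Finset α}, δ ∉ P → δ ∉ Q → (P, Q) ≠ (I, J') →
          (P, Q) ≠ (J', I) → Valid I J P Q → Valid I J' P Q := by
        rintro P Q h1 h2 h3 h4 ⟨p1, p2, p3, p4, _, _⟩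
        refine ⟨p1, p2, p3, ?_, ?_, ?_⟩
        · intro x hx
          rw [hUnion, mem_erase]
          refine ⟨?_, p4 hx⟩
          rintro rfl
          rcases mem_union.mp hx with h | h
          exacts [h1 h, h2 h]
        · rintro ⟨rfl, rfl⟩; exact h3 rfl
        · rintro ⟨rfl, rfl⟩; exact h4 rfl
      refine ⟨?_, ?_, ?_⟩
      · -- bounds
        intro P Q v
        rw [heval (P, Q)]
        by_cases h1 : δ ∈ P
        · rw [psiStep_mem1 h1, abs_of_nonneg hM0]
          exact ⟨hM1, le_refl _⟩
        by_cases h2 : δ ∈ Q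
        · rw [psiStep_mem2 h1 h2, abs_neg, abs_of_nonneg hM0]
          exact ⟨hM1, le_refl _⟩
        by_cases h3 : (P, Q) = (I, J')
        · rw [psiStep_s1 h1 h2 h3, abs_of_nonneg hM0]
          exact ⟨hM1, le_refl _⟩
        by_cases h4 : (P, Q) = (J', I)
        · rw [psiStep_s2 h1 h2 h3 h4, abs_neg, abs_of_nonneg hM0]
          exact ⟨hM1, le_refl _⟩
        · rw [psiStep_rec h1 h2 h3 h4]
          obtain ⟨b1, b2⟩ := ih1 P Q (vtrans h1 h2 h3 h4 v)
          exact ⟨b1, by linarith⟩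
      · -- equivariance
        intro P Q hd
        rw [heval (Q, P), heval (P, Q)]
        by_cases h1 : δ ∈ P
        · have h1' : δ ∉ Q := disjoint_left.mp hd h1
          rw [psiStep_mem2 h1' h1, psiStep_mem1 h1]
        · by_cases h2 : δ ∈ Q
          · rw [psiStep_mem1 h2, psiStep_mem2 h1 h2, neg_neg]
          · by_cases e1 : (P, Q) = (I, J')
            · rw [Prod.mk.injEq] at e1
              obtain ⟨hPe, hQe⟩ := e1; replace hPe := hPe.symm; replace hQe := hQe.symm; subst hPe; subst hQe
              rw [psiStep_s2 h2 h1 hJ'I_ne rfl, psiStep_s1 h1 h2 rfl]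
            · by_cases e2 : (P, Q) = (J', I)
              · rw [Prod.mk.injEq] at e2
                obtain ⟨hPe, hQe⟩ := e2; replace hPe := hPe.symm; replace hQe := hQe.symm; subst hPe; subst hQe
                rw [psiStep_s1 h2 h1 rfl, psiStep_s2 h1 h2 hJ'I_ne rfl, neg_neg]
              · have n1 : (Q, P) ≠ (I, J') := fun hh => e2 (by
                  rw [Prod.mk.injEq] at hh ⊢; exact ⟨hh.2, hh.1⟩)
                have n2 : (Q, P) ≠ (J', I) := fun hh => e1 (by
                  rw [Prod.mk.injEq] at hh ⊢; exact ⟨hh.2, hh.1⟩)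
                rw [psiStep_rec h2 h1 n1 n2,
                  psiStep_rec h1 h2 e1 e2]
                exact ih2 P Q hd
      · -- monotonicity
        intro P Q P' Q' v v' hPP hQQ
        obtain ⟨hPne, hQne, hPQ, hsub, hnc1, hnc2⟩ := id v
        obtain ⟨hPne', hQne', hPQ', hsub', hnc1', hnc2'⟩ := id v'
        rw [heval (P, Q), heval (P', Q')]
        by_cases h1 : δ ∈ P
        · rw [psiStep_mem1 h1, psiStep_mem1 (hPP h1)]
          exact Or.inl rfl
        by_cases h2 : δ ∈ Q
        · have h1' : δ ∉ P' := fun h => disjoint_left.mp hPQ' h (hQQ h2)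
          rw [psiStep_mem2 h1 h2, psiStep_mem2 h1' (hQQ h2)]
          exact Or.inl rfl
        by_cases e1 : (P, Q) = (I, J')
        · rw [Prod.mk.injEq] at e1
          obtain ⟨hPe, hQe⟩ := e1; replace hPe := hPe.symm; replace hQe := hQe.symm; subst hPe; subst hQe
          by_cases g1 : δ ∈ P'
          · rw [psiStep_s1 h1 h2 rfl, psiStep_mem1 g1]
            exact Or.inl rfl
          by_cases g2 : δ ∈ Q'
          · exfalso
            have hJQ' : J ⊆ Q' := by rw [← hins]; exact insert_subset g2 hQQ
            have hP'I : P' = I := by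
              refine subset_antisymm ?_ hPP
              intro a ha
              rcases mem_union.mp (hsub' (mem_union_left _ ha)) with h | h
              · exact h
              · exact absurd (hJQ' h) (disjoint_left.mp hPQ' ha)
            have hQ'J : Q' = J := by
              refine subset_antisymm ?_ hJQ'
              intro q hq
              rcases mem_union.mp (hsub' (mem_union_right _ hq)) with h | h
              · exact absurd hq (disjoint_left.mp hPQ' (hP'I ▸ h))
              · exact h
            exact hnc1' ⟨hP'I, hQ'J⟩
          by_cases s1' : (P', Q') = (I, J')
          · rw [psiStep_s1 h1 h2 rfl, psiStep_s1 g1 g2 s1']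
            exact Or.inl rfl
          by_cases s2' : (P', Q') = (J', I)
          · exfalso
            rw [Prod.mk.injEq] at s2'
            obtain ⟨a, ha⟩ := hInon
            exact disjoint_left.mp hIJ' ha (s2'.1 ▸ hPP ha)
          · exfalso
            apply s1'
            have hP'I : P' = I := by
              refine subset_antisymm ?_ hPP
              intro a ha
              rcases mem_union.mp (hsub' (mem_union_left _ ha)) with h | h
              · exact h
              · exfalso
                have haJ' : a ∈ J' := mem_erase.mpr ⟨fun e => g1 (e ▸ ha), h⟩
                exact disjoint_left.mp hPQ' ha (hQQ haJ')
            have hQ'J' : Q' = J' := by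
              refine subset_antisymm ?_ hQQ
              intro q hq
              rcases mem_union.mp (hsub' (mem_union_right _ hq)) with h | h
              · exact absurd hq (disjoint_left.mp hPQ' (hP'I ▸ h))
              · exact mem_erase.mpr ⟨fun e => g2 (e ▸ hq), h⟩
            rw [hP'I, hQ'J']
        by_cases e2 : (P, Q) = (J', I)
        · rw [Prod.mk.injEq] at e2
          obtain ⟨hPe, hQe⟩ := e2; replace hPe := hPe.symm; replace hQe := hQe.symm; subst hPe; subst hQe
          by_cases g1 : δ ∈ P'
          · exfalso
            have hJP' : J ⊆ P' := by rw [← hins]; exact insert_subset g1 hPP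
            have hP'J : P' = J := by
              refine subset_antisymm ?_ hJP'
              intro a ha
              rcases mem_union.mp (hsub' (mem_union_left _ ha)) with h | h
              · exact absurd (hQQ h) (disjoint_left.mp hPQ' ha)
              · exact h
            have hQ'I : Q' = I := by
              refine subset_antisymm ?_ hQQ
              intro q hq
              rcases mem_union.mp (hsub' (mem_union_right _ hq)) with h | h
              · exact h
              · exact absurd hq (disjoint_left.mp hPQ' (hJP' h))
            exact hnc2' ⟨hP'J, hQ'I⟩
          by_cases g2 : δ ∈ Q'
          · rw [psiStep_s2 h1 h2 hJ'I_ne rfl, psiStep_mem2 g1 g2]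
            exact Or.inl rfl
          by_cases s1' : (P', Q') = (I, J')
          · exfalso
            rw [Prod.mk.injEq] at s1'
            obtain ⟨a, ha⟩ := hJ'ne
            exact disjoint_left.mp hIJ' (s1'.1 ▸ hPP ha) ha
          by_cases s2' : (P', Q') = (J', I)
          · rw [psiStep_s2 h1 h2 hJ'I_ne rfl, psiStep_s2 g1 g2 s1' s2']
            exact Or.inl rfl
          · exfalso
            apply s2'
            have hP'J' : P' = J' := by
              refine subset_antisymm ?_ hPP
              intro a ha
              rcases mem_union.mp (hsub' (mem_union_left _ ha)) with h | h
              · exact absurd (hQQ h) (disjoint_left.mp hPQ' ha)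
              · exact mem_erase.mpr ⟨fun e => g1 (e ▸ ha), h⟩
            have hQ'I : Q' = I := by
              refine subset_antisymm ?_ hQQ
              intro q hq
              rcases mem_union.mp (hsub' (mem_union_right _ hq)) with h | h
              · exact h
              · exfalso
                have hqJ' : q ∈ J' := mem_erase.mpr ⟨fun e => g2 (e ▸ hq), h⟩
                exact disjoint_left.mp hPQ' (hP'J' ▸ hqJ') hq
            rw [hP'J', hQ'I]
        · -- x in recursive branch
          have vx : Valid I J' P Q := vtrans h1 h2 e1 e2 v
          have hbx := ih1 P Q vx
          by_cases g1 : δ ∈ P'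
          · rw [psiStep_rec h1 h2 e1 e2, psiStep_mem1 g1, abs_of_nonneg hM0]
            exact Or.inr (by linarith [hbx.2])
          by_cases g2 : δ ∈ Q'
          · rw [psiStep_rec h1 h2 e1 e2, psiStep_mem2 g1 g2, abs_neg, abs_of_nonneg hM0]
            exact Or.inr (by linarith [hbx.2])
          by_cases s1' : (P', Q') = (I, J')
          · rw [psiStep_rec h1 h2 e1 e2, psiStep_s1 g1 g2 s1', abs_of_nonneg hM0]
            exact Or.inr (by linarith [hbx.2])
          by_cases s2' : (P', Q') = (J', I)
          · rw [psiStep_rec h1 h2 e1 e2, psiStep_s2 g1 g2 s1' s2', abs_neg,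
              abs_of_nonneg hM0]
            exact Or.inr (by linarith [hbx.2])
          · rw [psiStep_rec h1 h2 e1 e2, psiStep_rec g1 g2 s1' s2']
            exact ih3 P Q P' Q' vx (vtrans g1 g2 s1' s2' v') hPP hQQ
    · by_cases hI2 : 2 ≤ I.card
      · -- ===================== I-case =====================
        have heval := fun pq => psiF_succ_I (J := J) (fuel := fuel) hJ2 hI2 hInon pq
        set δ := I.max' hInon with hδdef
        set I' := I.erase δ with hI'def
        have hδI : δ ∈ I := I.max'_mem hInon
        have hδJ : δ ∉ J := fun h => disjoint_left.mp hIJ hδI h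
        have hI'card : I'.card = I.card - 1 := card_erase_of_mem hδI
        have hI'ne : I'.Nonempty := card_pos.mp (by omega)
        have hI'sub : I' ⊆ I := erase_subset _ _
        have hI'J : Disjoint I' J := hIJ.mono_left hI'sub
        have hins : insert δ I' = I := insert_erase hδI
        have hδI' : δ ∉ I' := notMem_erase _ _
        have hUnion : I' ∪ J = (I ∪ J).erase δ := by
          ext x
          simp only [mem_union, mem_erase]
          constructor
          · rintro (h | h)
            · exact ⟨(mem_erase.mp h).1, Or.inl (mem_erase.mp h).2⟩
            · exact ⟨fun e => hδJ (e ▸ h), Or.inr h⟩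
          · rintro ⟨hne, h | h⟩
            · exact Or.inl (mem_erase.mpr ⟨hne, h⟩)
            · exact Or.inr h
        have hUcard : (I' ∪ J).card + 1 = (I ∪ J).card := by
          rw [hUnion, card_erase_of_mem (mem_union_left _ hδI)]
          have : 0 < (I ∪ J).card := card_pos.mpr ⟨δ, mem_union_left _ hδI⟩
          omega
        have hU3 : 3 ≤ (I ∪ J).card := by
          have h := card_union_of_disjoint hIJ
          have := hJnon.card_pos
          omega
        have hM1 : (1 : ℤ) ≤ ((I ∪ J).card : ℤ) - 2 := by
          have : (3 : ℤ) ≤ ((I ∪ J).card : ℤ) := by exact_mod_cast hU3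
          omega
        have hM0 : (0 : ℤ) ≤ ((I ∪ J).card : ℤ) - 2 := by omega
        have hMM : ((I' ∪ J).card : ℤ) - 2 < ((I ∪ J).card : ℤ) - 2 := by
          have : ((I' ∪ J).card : ℤ) + 1 = ((I ∪ J).card : ℤ) := by exact_mod_cast hUcard
          omega
        obtain ⟨ih1, ih2, ih3⟩ := ih I' J (by omega) hI'J hI'ne hJnon
        have hJneI' : J ≠ I' := by
          intro h
          obtain ⟨a, ha⟩ := hJnon
          exact disjoint_left.mp hI'J (h ▸ ha) ha
        have hI'J_ne : (I', J) ≠ (J, I') := fun h => hJneI' (Prod.ext_iff.mp h).1.symm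
        have vtrans : ∀ {P Q : Finset α}, δ ∉ P → δ ∉ Q → (P, Q) ≠ (J, I') →
            (P, Q) ≠ (I', J) → Valid I J P Q → Valid I' J P Q := by
          rintro P Q h1 h2 h3 h4 ⟨p1, p2, p3, p4, _, _⟩
          refine ⟨p1, p2, p3, ?_, ?_, ?_⟩
          · intro x hx
            rw [hUnion, mem_erase]
            refine ⟨?_, p4 hx⟩
            rintro rfl
            rcases mem_union.mp hx with h | h
            exacts [h1 h, h2 h]
          · rintro ⟨rfl, rfl⟩; exact h4 rfl
          · rintro ⟨rfl, rfl⟩; exact h3 rfl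
        refine ⟨?_, ?_, ?_⟩
        · -- bounds
          intro P Q v
          rw [heval (P, Q)]
          by_cases h1 : δ ∈ P
          · rw [psiStep_mem1 h1, abs_of_nonneg hM0]
            exact ⟨hM1, le_refl _⟩
          by_cases h2 : δ ∈ Q
          · rw [psiStep_mem2 h1 h2, abs_neg, abs_of_nonneg hM0]
            exact ⟨hM1, le_refl _⟩
          by_cases h3 : (P, Q) = (J, I')
          · rw [psiStep_s1 h1 h2 h3, abs_of_nonneg hM0]
            exact ⟨hM1, le_refl _⟩
          by_cases h4 : (P, Q) = (I', J)
          · rw [psiStep_s2 h1 h2 h3 h4, abs_neg, abs_of_nonneg hM0]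
            exact ⟨hM1, le_refl _⟩
          · rw [psiStep_rec h1 h2 h3 h4]
            obtain ⟨b1, b2⟩ := ih1 P Q (vtrans h1 h2 h3 h4 v)
            exact ⟨b1, by linarith⟩
        · -- equivariance
          intro P Q hd
          rw [heval (Q, P), heval (P, Q)]
          by_cases h1 : δ ∈ P
          · have h1' : δ ∉ Q := disjoint_left.mp hd h1
            rw [psiStep_mem2 h1' h1, psiStep_mem1 h1]
          · by_cases h2 : δ ∈ Q
            · rw [psiStep_mem1 h2, psiStep_mem2 h1 h2, neg_neg]
            · by_cases e1 : (P, Q) = (J, I')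
              · rw [Prod.mk.injEq] at e1
                obtain ⟨hPe, hQe⟩ := e1; replace hPe := hPe.symm; replace hQe := hQe.symm; subst hPe; subst hQe
                rw [psiStep_s2 h2 h1 hI'J_ne rfl, psiStep_s1 h1 h2 rfl]
              · by_cases e2 : (P, Q) = (I', J)
                · rw [Prod.mk.injEq] at e2
                  obtain ⟨hPe, hQe⟩ := e2; replace hPe := hPe.symm; replace hQe := hQe.symm; subst hPe; subst hQe
                  rw [psiStep_s1 h2 h1 rfl, psiStep_s2 h1 h2 hI'J_ne rfl, neg_neg]
                · have n1 : (Q, P) ≠ (J, I') := fun hh => e2 (by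
                    rw [Prod.mk.injEq] at hh ⊢; exact ⟨hh.2, hh.1⟩)
                  have n2 : (Q, P) ≠ (I', J) := fun hh => e1 (by
                    rw [Prod.mk.injEq] at hh ⊢; exact ⟨hh.2, hh.1⟩)
                  rw [psiStep_rec h2 h1 n1 n2,
                    psiStep_rec h1 h2 e1 e2]
                  exact ih2 P Q hd
        · -- monotonicity
          intro P Q P' Q' v v' hPP hQQ
          obtain ⟨hPne, hQne, hPQ, hsub, hnc1, hnc2⟩ := id v
          obtain ⟨hPne', hQne', hPQ', hsub', hnc1', hnc2'⟩ := id v'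
          rw [heval (P, Q), heval (P', Q')]
          by_cases h1 : δ ∈ P
          · rw [psiStep_mem1 h1, psiStep_mem1 (hPP h1)]
            exact Or.inl rfl
          by_cases h2 : δ ∈ Q
          · have h1' : δ ∉ P' := fun h => disjoint_left.mp hPQ' h (hQQ h2)
            rw [psiStep_mem2 h1 h2, psiStep_mem2 h1' (hQQ h2)]
            exact Or.inl rfl
          by_cases e1 : (P, Q) = (J, I')
          · rw [Prod.mk.injEq] at e1
            obtain ⟨hPe, hQe⟩ := e1; replace hPe := hPe.symm; replace hQe := hQe.symm; subst hPe; subst hQe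
            by_cases g1 : δ ∈ P'
            · rw [psiStep_s1 h1 h2 rfl, psiStep_mem1 g1]
              exact Or.inl rfl
            by_cases g2 : δ ∈ Q'
            · exfalso
              have hIQ' : I ⊆ Q' := by rw [← hins]; exact insert_subset g2 hQQ
              have hP'J : P' = J := by
                refine subset_antisymm ?_ hPP
                intro a ha
                rcases mem_union.mp (hsub' (mem_union_left _ ha)) with h | h
                · exact absurd (hIQ' h) (disjoint_left.mp hPQ' ha)
                · exact h
              have hQ'I : Q' = I := by
                refine subset_antisymm ?_ hIQ'
                intro q hq
                rcases mem_union.mp (hsub' (mem_union_right _ hq)) with h | h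
                · exact h
                · exact absurd hq (disjoint_left.mp hPQ' (hP'J ▸ h))
              exact hnc2' ⟨hP'J, hQ'I⟩
            by_cases s1' : (P', Q') = (J, I')
            · rw [psiStep_s1 h1 h2 rfl, psiStep_s1 g1 g2 s1']
              exact Or.inl rfl
            by_cases s2' : (P', Q') = (I', J)
            · exfalso
              rw [Prod.mk.injEq] at s2'
              obtain ⟨a, ha⟩ := hJnon
              exact disjoint_left.mp hI'J (s2'.1 ▸ hPP ha) ha
            · exfalso
              apply s1'
              have hP'J : P' = J := by
                refine subset_antisymm ?_ hPP
                intro a ha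
                rcases mem_union.mp (hsub' (mem_union_left _ ha)) with h | h
                · exfalso
                  have haI' : a ∈ I' := mem_erase.mpr ⟨fun e => g1 (e ▸ ha), h⟩
                  exact disjoint_left.mp hPQ' ha (hQQ haI')
                · exact h
              have hQ'I' : Q' = I' := by
                refine subset_antisymm ?_ hQQ
                intro q hq
                rcases mem_union.mp (hsub' (mem_union_right _ hq)) with h | h
                · exact mem_erase.mpr ⟨fun e => g2 (e ▸ hq), h⟩
                · exact absurd hq (disjoint_left.mp hPQ' (hP'J ▸ h))
              rw [hP'J, hQ'I']
          by_cases e2 : (P, Q) = (I', J)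
          · rw [Prod.mk.injEq] at e2
            obtain ⟨hPe, hQe⟩ := e2; replace hPe := hPe.symm; replace hQe := hQe.symm; subst hPe; subst hQe
            by_cases g1 : δ ∈ P'
            · exfalso
              have hIP' : I ⊆ P' := by rw [← hins]; exact insert_subset g1 hPP
              have hP'I : P' = I := by
                refine subset_antisymm ?_ hIP'
                intro a ha
                rcases mem_union.mp (hsub' (mem_union_left _ ha)) with h | h
                · exact h
                · exact absurd (hQQ h) (disjoint_left.mp hPQ' ha)
              have hQ'J : Q' = J := by
                refine subset_antisymm ?_ hQQ
                intro q hq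
                rcases mem_union.mp (hsub' (mem_union_right _ hq)) with h | h
                · exact absurd hq (disjoint_left.mp hPQ' (hP'I ▸ h))
                · exact h
              exact hnc1' ⟨hP'I, hQ'J⟩
            by_cases g2 : δ ∈ Q'
            · rw [psiStep_s2 h1 h2 hI'J_ne rfl, psiStep_mem2 g1 g2]
              exact Or.inl rfl
            by_cases s1' : (P', Q') = (J, I')
            · exfalso
              rw [Prod.mk.injEq] at s1'
              obtain ⟨a, ha⟩ := hI'ne
              exact disjoint_left.mp hI'J ha (s1'.1 ▸ hPP ha)
            by_cases s2' : (P', Q') = (I', J)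
            · rw [psiStep_s2 h1 h2 hI'J_ne rfl, psiStep_s2 g1 g2 s1' s2']
              exact Or.inl rfl
            · exfalso
              apply s2'
              have hP'I' : P' = I' := by
                refine subset_antisymm ?_ hPP
                intro a ha
                rcases mem_union.mp (hsub' (mem_union_left _ ha)) with h | h
                · exact mem_erase.mpr ⟨fun e => g1 (e ▸ ha), h⟩
                · exact absurd (hQQ h) (disjoint_left.mp hPQ' ha)
              have hQ'J : Q' = J := by
                refine subset_antisymm ?_ hQQ
                intro q hq
                rcases mem_union.mp (hsub' (mem_union_right _ hq)) with h | h
                · exfalso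
                  have hqI' : q ∈ I' := mem_erase.mpr ⟨fun e => g2 (e ▸ hq), h⟩
                  exact disjoint_left.mp hPQ' (hP'I' ▸ hqI') hq
                · exact h
              rw [hP'I', hQ'J]
          · -- x in recursive branch
            have vx : Valid I' J P Q := vtrans h1 h2 e1 e2 v
            have hbx := ih1 P Q vx
            by_cases g1 : δ ∈ P'
            · rw [psiStep_rec h1 h2 e1 e2, psiStep_mem1 g1, abs_of_nonneg hM0]
              exact Or.inr (by linarith [hbx.2])
            by_cases g2 : δ ∈ Q'
            · rw [psiStep_rec h1 h2 e1 e2, psiStep_mem2 g1 g2, abs_neg,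
                abs_of_nonneg hM0]
              exact Or.inr (by linarith [hbx.2])
            by_cases s1' : (P', Q') = (J, I')
            · rw [psiStep_rec h1 h2 e1 e2, psiStep_s1 g1 g2 s1', abs_of_nonneg hM0]
              exact Or.inr (by linarith [hbx.2])
            by_cases s2' : (P', Q') = (I', J)
            · rw [psiStep_rec h1 h2 e1 e2, psiStep_s2 g1 g2 s1' s2', abs_neg,
                abs_of_nonneg hM0]
              exact Or.inr (by linarith [hbx.2])
            · rw [psiStep_rec h1 h2 e1 e2, psiStep_rec g1 g2 s1' s2']
              exact ih3 P Q P' Q' vx (vtrans g1 g2 s1' s2' v') hPP hQQ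
      · -- ===================== junk case =====================
        refine ⟨?_, ?_, ?_⟩
        · intro P Q v
          exact (junk_valid (by omega) (by omega) v).elim
        · intro P Q _
          rw [psiF_succ_junk hJ2 hI2, psiF_succ_junk hJ2 hI2]
          simp
        · intro P Q P' Q' v _ _ _
          exact (junk_valid (by omega) (by omega) v).elim

end ColorfulKlmAux


section ColorfulKlmGlue

open Finset ColorfulKlmAux

variable {V : Type*} [Fintype V] [DecidableEq V]

theorem exists_rainbow_subset {β : Type*} [DecidableEq β] (c : V → β) :
    ∀ (S : Finset β) (A : Finset V), A.image c = S →
      ∃ A', A' ⊆ A ∧ A'.card = S.card ∧ A'.image c = S := by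
  intro S
  induction S using Finset.induction_on with
  | empty => exact fun A _ => ⟨∅, empty_subset _, by simp, by simp⟩
  | @insert s S' hs ihS =>
    intro A hA
    have hsA : s ∈ A.image c := by rw [hA]; exact mem_insert_self _ _
    obtain ⟨a, ha, hca⟩ := mem_image.mp hsA
    have h₀ : (A.filter (fun v => c v ≠ s)).image c = S' := by
      ext x
      simp only [mem_image, mem_filter]
      constructor
      · rintro ⟨v, ⟨hvA, hvs⟩, rfl⟩
        have hmem : c v ∈ insert s S' := hA ▸ mem_image_of_mem c hvA
        rcases mem_insert.mp hmem with h | h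
        · exact absurd h hvs
        · exact h
      · intro hx
        have hmem : x ∈ A.image c := hA ▸ mem_insert_of_mem hx
        obtain ⟨v, hvA, rfl⟩ := mem_image.mp hmem
        exact ⟨v, ⟨hvA, fun e => hs (e ▸ hx)⟩, rfl⟩
    obtain ⟨A₁, hsub, hcard, him⟩ := ihS _ h₀
    refine ⟨insert a A₁, ?_, ?_, ?_⟩
    · exact insert_subset ha (hsub.trans (filter_subset _ _))
    · rw [card_insert_of_notMem, hcard, card_insert_of_notMem hs]
      intro haA₁
      exact (mem_filter.mp (hsub haA₁)).2 hca
    · rw [image_insert, hca, him]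

theorem surj_of_chromatic {G : SimpleGraph V} {t : ℕ}
    (hchi : G.chromaticNumber = (t : ℕ∞)) (c : V → Fin t)
    (hc : ∀ u v, G.Adj u v → c u ≠ c v) : Function.Surjective c := by
  intro i
  by_contra hni
  push_neg at hni
  have hpos : 0 < t := Nat.pos_of_ne_zero (fun h => (h ▸ i).elim0)
  have hcolor : G.Coloring {x : Fin t // x ≠ i} :=
    SimpleGraph.Coloring.mk (fun v => ⟨c v, hni v⟩)
      (fun {u v} hadj heq => hc u v hadj (congrArg Subtype.val heq))
  have hcol := hcolor.colorable
  have hcard : Fintype.card {x : Fin t // x ≠ i} = t - 1 := by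
    simp [Fintype.card_subtype_compl, Fintype.card_subtype_eq]
  rw [hcard] at hcol
  have hle := hcol.chromaticNumber_le
  rw [hchi] at hle
  have : t ≤ t - 1 := by exact_mod_cast hle
  omega

end ColorfulKlmGlue

open Finset ColorfulKlmAux in
/-- Colorful `K_{ℓ,m}` theorem via cross-index: if `χ(G) = Xind(Hom(K₂,G)) + 2 = t`,
then for every proper coloring `c : V → [t]` and every bipartition `I ∪ J = [t]`
of the colors there is a complete bipartite subgraph with color set exactly `I`
on one side (each color once) and exactly `J` on the other side. -/
theorem colorful_Klm_crossindex {V : Type*} [Fintype V] [DecidableEq V]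
    (G : SimpleGraph V) (t : ℕ)
    (hchi : G.chromaticNumber = (t : ℕ∞))
    (hX : Xind (HomPoset G) (homNeg G) + 2 = t)
    (c : V → Fin t) (hc : ∀ u v, G.Adj u v → c u ≠ c v)
    (I J : Finset (Fin t)) (hIJ : Disjoint I J) (hIJunion : I ∪ J = Finset.univ) :
    ∃ A B : Finset V,
      (∀ a ∈ A, ∀ b ∈ B, G.Adj a b) ∧
      A.card = I.card ∧ B.card = J.card ∧
      A.image c = I ∧ B.image c = J := by
  classical
  by_cases hJe : J = ∅
  · have hIuniv : I = Finset.univ := by rw [← hIJunion, hJe, union_empty]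
    have hsurj := surj_of_chromatic hchi c hc
    set f : Fin t → V := fun i => (hsurj i).choose with hf
    have hcf : ∀ i, c (f i) = i := fun i => (hsurj i).choose_spec
    have hfinj : Function.Injective f := fun a b h => by rw [← hcf a, ← hcf b, h]
    refine ⟨Finset.univ.image f, ∅, ?_, ?_, ?_, ?_, ?_⟩
    · intro a _ b hb; exact absurd hb (notMem_empty b)
    · rw [card_image_of_injective _ hfinj, hIuniv]
    · simp [hJe]
    · have him : Finset.univ.image (c ∘ f) = Finset.univ := by
        ext x
        simp only [mem_image, mem_univ, iff_true, Function.comp_apply]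
        exact ⟨x, trivial, hcf x⟩
      rw [image_image, him, hIuniv]
    · rw [hJe, image_empty]
  by_cases hIe : I = ∅
  · have hJuniv : J = Finset.univ := by rw [← hIJunion, hIe, empty_union]
    have hsurj := surj_of_chromatic hchi c hc
    set f : Fin t → V := fun i => (hsurj i).choose with hf
    have hcf : ∀ i, c (f i) = i := fun i => (hsurj i).choose_spec
    have hfinj : Function.Injective f := fun a b h => by rw [← hcf a, ← hcf b, h]
    refine ⟨∅, Finset.univ.image f, ?_, ?_, ?_, ?_, ?_⟩
    · intro a ha; exact absurd ha (notMem_empty a)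
    · simp [hIe]
    · rw [card_image_of_injective _ hfinj, hJuniv]
    · rw [hIe, image_empty]
    · have him : Finset.univ.image (c ∘ f) = Finset.univ := by
        ext x
        simp only [mem_image, mem_univ, iff_true, Function.comp_apply]
        exact ⟨x, trivial, hcf x⟩
      rw [image_image, him, hJuniv]
  have hInon : I.Nonempty := nonempty_iff_ne_empty.mpr hIe
  have hJnon : J.Nonempty := nonempty_iff_ne_empty.mpr hJe
  have hUcardt : (I ∪ J).card = t := by
    rw [hIJunion, card_univ, Fintype.card_fin]
  have hcards : I.card + J.card = t := by
    rw [← card_union_of_disjoint hIJ, hUcardt]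
  have ht2 : 2 ≤ t := by
    have := hInon.card_pos
    have := hJnon.card_pos
    omega
  rcases Nat.lt_or_ge t 3 with ht3 | ht3
  · -- t = 2
    have hedge : ∃ u v, G.Adj u v := by
      by_contra hno
      push_neg at hno
      have hcol : G.Colorable 1 := ⟨SimpleGraph.Coloring.mk (fun _ => (0 : Fin 1))
        (fun {u v} hadj => absurd hadj (hno u v))⟩
      have hle := hcol.chromaticNumber_le
      rw [hchi] at hle
      have : t ≤ 1 := by exact_mod_cast hle
      omega
    obtain ⟨u, v, huv⟩ := hedge
    have hcuv := hc u v huv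
    have hI1 : I.card = 1 := by have := hInon.card_pos; have := hJnon.card_pos; omega
    have hJ1 : J.card = 1 := by have := hInon.card_pos; have := hJnon.card_pos; omega
    obtain ⟨i, hi⟩ := card_eq_one.mp hI1
    obtain ⟨j, hj⟩ := card_eq_one.mp hJ1
    have hmemu : c u ∈ I ∪ J := by rw [hIJunion]; exact mem_univ _
    have hmemv : c v ∈ I ∪ J := by rw [hIJunion]; exact mem_univ _
    rw [hi, hj] at hmemu hmemv
    simp only [mem_union, mem_singleton] at hmemu hmemv
    rcases hmemu with hu | hu
    · have hv : c v = j := by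
        rcases hmemv with h | h
        · exact absurd (hu.trans h.symm) hcuv
        · exact h
      refine ⟨{u}, {v}, ?_, by simp [hi], by simp [hj],
        by rw [image_singleton, hu, hi], by rw [image_singleton, hv, hj]⟩
      intro a ha b hb
      rw [mem_singleton] at ha hb
      subst ha; subst hb; exact huv
    · have hv : c v = i := by
        rcases hmemv with h | h
        · exact h
        · exact absurd (hu.trans h.symm) hcuv
      refine ⟨{v}, {u}, ?_, by simp [hi], by simp [hj],
        by rw [image_singleton, hv, hi], by rw [image_singleton, hu, hj]⟩
      intro a ha b hb
      rw [mem_singleton] at ha hb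
      subst ha; subst hb; exact huv.symm
  · -- main case t ≥ 3
    by_contra hcon
    have hNC : ∀ x : HomPoset G,
        ¬(((x.1.1.image c = I) ∧ (x.1.2.image c = J)) ∨
          ((x.1.1.image c = J) ∧ (x.1.2.image c = I))) := by
      rintro ⟨⟨A, B⟩, hAne, hBne, hAB, hadj⟩ (⟨h1, h2⟩ | ⟨h1, h2⟩)
      · obtain ⟨A', hA's, hA'c, hA'i⟩ := exists_rainbow_subset c I A h1
        obtain ⟨B', hB's, hB'c, hB'i⟩ := exists_rainbow_subset c J B h2
        exact hcon ⟨A', B', fun a ha b hb => hadj a (hA's ha) b (hB's hb),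
          hA'c, hB'c, hA'i, hB'i⟩
      · obtain ⟨A', hA's, hA'c, hA'i⟩ := exists_rainbow_subset c I B h2
        obtain ⟨B', hB's, hB'c, hB'i⟩ := exists_rainbow_subset c J A h1
        exact hcon ⟨A', B', fun a ha b hb => (hadj b (hB's hb) a (hA's ha)).symm,
          hA'c, hB'c, hA'i, hB'i⟩
    have hval : ∀ x : HomPoset G, Valid I J (x.1.1.image c) (x.1.2.image c) := by
      intro x
      refine ⟨x.2.1.image c, x.2.2.1.image c, ?_, ?_, ?_, ?_⟩
      · rw [disjoint_left]
        intro k hk1 hk2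
        obtain ⟨a, ha, hca⟩ := mem_image.mp hk1
        obtain ⟨b, hb, hcb⟩ := mem_image.mp hk2
        exact hc a b (x.2.2.2.2 a ha b hb) (hca.trans hcb.symm)
      · rw [hIJunion]; exact subset_univ _
      · exact fun h => hNC x (Or.inl h)
      · exact fun h => hNC x (Or.inr ⟨h.1, h.2⟩)
    obtain ⟨hb, he, hm⟩ := psiF_spec (I.card + J.card) I J le_rfl hIJ hInon hJnon
    set Φ : HomPoset G → ℤ :=
      fun x => psiF (I.card + J.card) I J (x.1.1.image c, x.1.2.image c) with hΦ
    have hcast : ((t - 3 : ℕ) : ℤ) = (t : ℤ) - 3 := by omega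
    have hQmap : IsQMap (homNeg G) (t - 3) Φ := by
      refine ⟨?_, ?_, ?_⟩
      · intro p
        obtain ⟨b1, b2⟩ := hb _ _ (hval p)
        refine ⟨b1, ?_⟩
        rw [hUcardt] at b2
        rw [hcast]
        linarith
      · intro p
        exact he _ _ (hval p).2.2.1
      · intro p q hpq
        exact hm _ _ _ _ (hval p) (hval q)
          (image_subset_image hpq.1) (image_subset_image hpq.2)
    have hle : Xind (HomPoset G) (homNeg G) ≤ t - 3 := Nat.sInf_le ⟨Φ, hQmap⟩
    omega
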